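/- For any fixed positive integer n₀, every sufficiently large superabundant number is a multiple of n₀. -/

import Mathlib

def Superabundant (s : ℕ) : Prop :=
  0 < s ∧ ∀ n : ℕ, 0 < n → n < s → (ArithmeticFunction.sigma 1 n : ℝ) / n < (ArithmeticFunction.sigma 1 s : ℝ) / s

lemma sigma_pp_mul (p j : ℕ) (hp : p.Prime) :
    ((ArithmeticFunction.sigma 1 (p ^ j) : ℕ) : ℤ) * ((p : ℤ) - 1) = (p : ℤ) ^ (j + 1) - 1 := by
  rw [ArithmeticFunction.sigma_one_apply_prime_pow hp]
  push_cast
  exact geom_sum_mul (p : ℤ) (j + 1)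

lemma core_poly (p q X T Y K : ℤ) (hp : 2 ≤ p) (hq : 2 ≤ q) (hK : 1 ≤ K)
    (hX0 : 0 ≤ X) (hT0 : 0 ≤ T)
    (hXK : X ≤ K) (hT : T ≤ p * q) (hTp : p < T) (hY : 2 * K < Y) :
    (X - p) * (q * Y - 1) ≤ (X - 1) * (q * Y - T) := by
  have h1 : X * T ≤ K * (p * q) := mul_le_mul hXK hT hT0 (by linarith)
  have h2 : (p - 1) * q * (2 * K) ≤ (p - 1) * q * Y :=
    mul_le_mul_of_nonneg_left hY.le (by nlinarith)
  have h3 : (0:ℤ) ≤ (p - 2) * q * K := mul_nonneg (mul_nonneg (by linarith) (by linarith)) (by linarith)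
  nlinarith [h1, h2, h3, hTp, hX0]

lemma core_int (p q a k t c : ℕ) (hp : 2 ≤ p) (hq : 2 ≤ q) (hak : a < k)
    (htp : (p:ℤ) < (q:ℤ) ^ t) (htp2 : ((q:ℤ)) ^ t ≤ (p:ℤ) * q)
    (hb : 2 * (p:ℤ) ^ (k + 1) < (q:ℤ) ^ (t + c)) :
    ((p:ℤ) ^ (a + 1) - 1) * ((q:ℤ) ^ (t + c + 1) - 1) * p ≤
    ((p:ℤ) ^ (a + 2) - 1) * ((q:ℤ) ^ (c + 1) - 1) * (q:ℤ) ^ t := by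
  have hp1 : (1:ℤ) ≤ (p:ℤ) := by exact_mod_cast hp.trans' (by norm_num)
  have hXK : (p:ℤ) ^ (a + 2) ≤ (p:ℤ) ^ (k + 1) :=
    pow_le_pow_right₀ (by exact_mod_cast hp.trans' (by norm_num)) (by omega)
  have key := core_poly (p:ℤ) (q:ℤ) ((p:ℤ) ^ (a + 2)) ((q:ℤ) ^ t) ((q:ℤ) ^ (t + c))
    ((p:ℤ) ^ (k + 1)) (by exact_mod_cast hp) (by exact_mod_cast hq)
    (one_le_pow₀ (by linarith)) (by positivity) (by positivity) hXK htp2 htp hb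
  calc ((p:ℤ) ^ (a + 1) - 1) * ((q:ℤ) ^ (t + c + 1) - 1) * p
      = ((p:ℤ) ^ (a + 2) - p) * ((q:ℤ) * (q:ℤ) ^ (t + c) - 1) := by ring
    _ ≤ ((p:ℤ) ^ (a + 2) - 1) * ((q:ℤ) * (q:ℤ) ^ (t + c) - (q:ℤ) ^ t) := key
    _ = ((p:ℤ) ^ (a + 2) - 1) * ((q:ℤ) ^ (c + 1) - 1) * (q:ℤ) ^ t := by ring

lemma core_sigma (p q a k t c : ℕ) (hp : p.Prime) (hq : q.Prime) (hak : a < k)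
    (htp : p < q ^ t) (htp2 : q ^ t ≤ p * q) (hb : 2 * p ^ (k + 1) < q ^ (t + c)) :
    ArithmeticFunction.sigma 1 (p ^ a) * ArithmeticFunction.sigma 1 (q ^ (t + c)) * p ≤
      ArithmeticFunction.sigma 1 (p ^ (a + 1)) * ArithmeticFunction.sigma 1 (q ^ c) * q ^ t := by
  have h1 := sigma_pp_mul p a hp
  have h2 := sigma_pp_mul p (a + 1) hp
  have h3 := sigma_pp_mul q (t + c) hq
  have h4 := sigma_pp_mul q c hq
  have hp2 : (2:ℤ) ≤ (p:ℤ) := by exact_mod_cast hp.two_le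
  have hq2 : (2:ℤ) ≤ (q:ℤ) := by exact_mod_cast hq.two_le
  have hpos : (0:ℤ) < ((p:ℤ) - 1) * ((q:ℤ) - 1) := by nlinarith
  rw [← Nat.cast_le (α := ℤ)]
  push_cast
  rw [← mul_le_mul_iff_of_pos_right hpos]
  calc ((ArithmeticFunction.sigma 1 (p ^ a) : ℤ) * (ArithmeticFunction.sigma 1 (q ^ (t + c)) : ℤ) * p)
        * (((p:ℤ) - 1) * ((q:ℤ) - 1))
      = ((ArithmeticFunction.sigma 1 (p ^ a) : ℤ) * ((p:ℤ) - 1))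
        * ((ArithmeticFunction.sigma 1 (q ^ (t + c)) : ℤ) * ((q:ℤ) - 1)) * p := by ring
    _ = ((p:ℤ) ^ (a + 1) - 1) * ((q:ℤ) ^ (t + c + 1) - 1) * p := by rw [h1, h3]
    _ ≤ ((p:ℤ) ^ (a + 2) - 1) * ((q:ℤ) ^ (c + 1) - 1) * (q:ℤ) ^ t := by
        refine core_int p q a k t c hp.two_le hq.two_le hak ?_ ?_ ?_ <;> exact_mod_cast ‹_›
    _ = ((ArithmeticFunction.sigma 1 (p ^ (a + 1)) : ℤ) * ((p:ℤ) - 1))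
        * ((ArithmeticFunction.sigma 1 (q ^ c) : ℤ) * ((q:ℤ) - 1)) * (q:ℤ) ^ t := by
        rw [h2, h4]
    _ = ((ArithmeticFunction.sigma 1 (p ^ (a + 1)) : ℤ) * (ArithmeticFunction.sigma 1 (q ^ c) : ℤ)
        * (q:ℤ) ^ t) * (((p:ℤ) - 1) * ((q:ℤ) - 1)) := by ring

lemma key_bound (p q k s : ℕ) (hp : p.Prime) (hq : q.Prime) (hne : q ≠ p)
    (hs : Superabundant s) (hak : s.factorization p < k) (hqs : q ∣ s) :
    q ^ s.factorization q ≤ 2 * p ^ (k + 1) := by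
  by_contra hcon
  push_neg at hcon
  obtain ⟨hs0, hSA⟩ := hs
  have hs0' : s ≠ 0 := hs0.ne'
  set a := s.factorization p with ha
  set b := s.factorization q with hbdef
  set t := Nat.log q p + 1 with htdef
  have hq1 : 1 < q := hq.one_lt
  have htp : p < q ^ t := Nat.lt_pow_succ_log_self hq1 p
  have hlog : q ^ Nat.log q p ≤ p := Nat.pow_log_le_self q hp.pos.ne'
  have htp2 : q ^ t ≤ p * q := by
    calc q ^ t = q ^ Nat.log q p * q := pow_succ q _
      _ ≤ p * q := Nat.mul_le_mul_right q hlog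
  have hpM : p ≤ 2 * p ^ (k + 1) := by
    calc p = p ^ 1 := (pow_one p).symm
      _ ≤ p ^ (k + 1) := Nat.pow_le_pow_right hp.pos (by omega)
      _ ≤ 2 * p ^ (k + 1) := by omega
  have htb : t ≤ b := by
    by_contra hh
    push_neg at hh
    have h5 : q ^ b ≤ q ^ Nat.log q p := Nat.pow_le_pow_right hq.pos (by omega)
    omega
  obtain ⟨c, hc⟩ : ∃ c, b = t + c := ⟨b - t, by omega⟩
  -- split s = p^a * (q^b * m)
  set s1 := ordCompl[p] s with hs1def
  have hs1 : s = p ^ a * s1 := (Nat.ordProj_mul_ordCompl_eq_self s p).symm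
  have hs10 : s1 ≠ 0 := (Nat.ordCompl_pos p hs0').ne'
  have hcp1 : Nat.Coprime p s1 := Nat.coprime_ordCompl hp hs0'
  have hb1 : s1.factorization q = b := by
    rw [hs1def, Nat.factorization_ordCompl]
    rw [Finsupp.erase_ne hne]
  set m := ordCompl[q] s1 with hmdef
  have hs2 : s1 = q ^ b * m := by
    rw [hmdef, ← hb1]; exact (Nat.ordProj_mul_ordCompl_eq_self s1 q).symm
  have hm0 : m ≠ 0 := (Nat.ordCompl_pos q hs10).ne'
  have hcqm : Nat.Coprime q m := Nat.coprime_ordCompl hq hs10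
  have hcpm : Nat.Coprime p m := hcp1.coprime_dvd_right (Nat.ordCompl_dvd s1 q)
  have hcpq : Nat.Coprime p q := (Nat.coprime_primes hp hq).mpr (Ne.symm hne)
  set n := p ^ (a + 1) * (q ^ c * m) with hndef
  have hn0 : 0 < n :=
    Nat.mul_pos (pow_pos hp.pos _) (Nat.mul_pos (pow_pos hq.pos _) (Nat.pos_of_ne_zero hm0))
  have hmul : n * q ^ t = s * p := by
    rw [hndef, hs1, hs2, hc]; ring
  have hns : n < s := by
    have h6 : n * q ^ t < s * q ^ t := by
      rw [hmul]
      exact mul_lt_mul_of_pos_left htp hs0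
    exact Nat.lt_of_mul_lt_mul_right h6
  -- sigma values
  have hco1 : Nat.Coprime (p ^ a) (q ^ b * m) := (((hcpq.pow_right b).mul_right hcpm).pow_left _)
  have hco2 : Nat.Coprime (q ^ b) m := hcqm.pow_left b
  have hco3 : Nat.Coprime (p ^ (a + 1)) (q ^ c * m) := (((hcpq.pow_right c).mul_right hcpm).pow_left _)
  have hco4 : Nat.Coprime (q ^ c) m := hcqm.pow_left c
  have hσs : ArithmeticFunction.sigma 1 s
      = ArithmeticFunction.sigma 1 (p ^ a) * (ArithmeticFunction.sigma 1 (q ^ b)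
        * ArithmeticFunction.sigma 1 m) := by
    conv_lhs => rw [hs1, hs2]
    rw [ArithmeticFunction.isMultiplicative_sigma.map_mul_of_coprime hco1,
      ArithmeticFunction.isMultiplicative_sigma.map_mul_of_coprime hco2]
  have hσn : ArithmeticFunction.sigma 1 n
      = ArithmeticFunction.sigma 1 (p ^ (a + 1)) * (ArithmeticFunction.sigma 1 (q ^ c)
        * ArithmeticFunction.sigma 1 m) := by
    rw [hndef, ArithmeticFunction.isMultiplicative_sigma.map_mul_of_coprime hco3,
      ArithmeticFunction.isMultiplicative_sigma.map_mul_of_coprime hco4]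
  have hcore : ArithmeticFunction.sigma 1 (p ^ a) * ArithmeticFunction.sigma 1 (q ^ (t + c)) * p ≤
      ArithmeticFunction.sigma 1 (p ^ (a + 1)) * ArithmeticFunction.sigma 1 (q ^ c) * q ^ t :=
    core_sigma p q a k t c hp hq hak htp htp2 (hc ▸ hcon)
  have hineq : ArithmeticFunction.sigma 1 s * n ≤ ArithmeticFunction.sigma 1 n * s := by
    calc ArithmeticFunction.sigma 1 s * n
        = (ArithmeticFunction.sigma 1 (p ^ a) * ArithmeticFunction.sigma 1 (q ^ (t + c)) * p)
          * (ArithmeticFunction.sigma 1 m * (p ^ a * (q ^ c * m))) := by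
          rw [hσs, hndef, hc]; ring
      _ ≤ (ArithmeticFunction.sigma 1 (p ^ (a + 1)) * ArithmeticFunction.sigma 1 (q ^ c) * q ^ t)
          * (ArithmeticFunction.sigma 1 m * (p ^ a * (q ^ c * m))) :=
          Nat.mul_le_mul_right _ hcore
      _ = ArithmeticFunction.sigma 1 n * s := by rw [hσn, hs1, hs2, hc]; ring
  have hlt := hSA n hn0 hns
  have hge : (ArithmeticFunction.sigma 1 s : ℝ) / s ≤ (ArithmeticFunction.sigma 1 n : ℝ) / n := by
    rw [div_le_div_iff₀ (by exact_mod_cast hs0) (by exact_mod_cast hn0)]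
    exact_mod_cast hineq
  linarith

lemma bounded_of_small_factorization (p k s : ℕ) (hp : p.Prime) (hs : Superabundant s)
    (hak : s.factorization p < k) : s ≤ (2 * p ^ (k + 1)) ^ (2 * p ^ (k + 1) + 1) := by
  set M := 2 * p ^ (k + 1) with hM
  have hs0 : s ≠ 0 := hs.1.ne'
  have hpM : p ^ (k + 1) ≤ M := by omega
  have hfac : ∀ q ∈ s.primeFactors, q ^ s.factorization q ≤ M := by
    intro q hqmem
    have hq := Nat.prime_of_mem_primeFactors hqmem
    have hqdvd := Nat.dvd_of_mem_primeFactors hqmem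
    by_cases hqp : q = p
    · subst hqp
      calc q ^ s.factorization q ≤ q ^ (k + 1) := Nat.pow_le_pow_right hq.pos (by omega)
        _ ≤ M := hpM
    · exact key_bound p q k s hp hq hqp hs hak hqdvd
  have hsub : s.primeFactors ⊆ Finset.range (M + 1) := by
    intro q hqmem
    rw [Finset.mem_range]
    have hq := Nat.prime_of_mem_primeFactors hqmem
    have hv : s.factorization q ≠ 0 :=
      (Nat.Prime.factorization_pos_of_dvd hq hs0 (Nat.dvd_of_mem_primeFactors hqmem)).ne'
    have h1 : q ≤ q ^ s.factorization q := Nat.le_self_pow hv q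
    have := hfac q hqmem
    omega
  have hcard : s.primeFactors.card ≤ M + 1 := by
    calc s.primeFactors.card ≤ (Finset.range (M + 1)).card := Finset.card_le_card hsub
      _ = M + 1 := Finset.card_range _
  have hM0 : 0 < M := by
    have := hp.pos
    have : 0 < p ^ (k + 1) := pow_pos hp.pos _
    omega
  calc s = ∏ q ∈ s.primeFactors, q ^ s.factorization q := by
        conv_lhs => rw [← Nat.factorization_prod_pow_eq_self hs0]
        rw [Finsupp.prod, Nat.support_factorization]
    _ ≤ M ^ s.primeFactors.card := Finset.prod_le_pow_card _ _ _ hfac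
    _ ≤ M ^ (M + 1) := Nat.pow_le_pow_right hM0 hcard

lemma prime_pow_eventually_dvd (p k : ℕ) (hp : p.Prime) :
    ∀ s, Superabundant s → (2 * p ^ (k + 1)) ^ (2 * p ^ (k + 1) + 1) < s → p ^ k ∣ s := by
  intro s hs hB
  have hs0 : s ≠ 0 := hs.1.ne'
  have hk : k ≤ s.factorization p := by
    by_contra hh
    push_neg at hh
    have := bounded_of_small_factorization p k s hp hs hh
    omega
  exact dvd_trans (pow_dvd_pow p hk) (Nat.ordProj_dvd s p)

theorem superabundant_eventually_dvd (n₀ : ℕ) (h : 0 < n₀) :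
    ∃ B : ℕ, ∀ s : ℕ, Superabundant s → B < s → n₀ ∣ s := by
  refine ⟨n₀.primeFactors.sup (fun p =>
    (2 * p ^ (n₀.factorization p + 1)) ^ (2 * p ^ (n₀.factorization p + 1) + 1)), ?_⟩
  intro s hs hB
  have hs0 : s ≠ 0 := hs.1.ne'
  rw [← Nat.factorization_le_iff_dvd h.ne' hs0]
  rw [Finsupp.le_def]
  intro p
  by_cases hmem : p ∈ n₀.primeFactors
  · have hp := Nat.prime_of_mem_primeFactors hmem
    have hle := Finset.le_sup (f := fun p =>
      (2 * p ^ (n₀.factorization p + 1)) ^ (2 * p ^ (n₀.factorization p + 1) + 1)) hmem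
    have hdvd : p ^ n₀.factorization p ∣ s :=
      prime_pow_eventually_dvd p (n₀.factorization p) hp s hs (lt_of_le_of_lt hle hB)
    exact (Nat.Prime.pow_dvd_iff_le_factorization hp hs0).mp hdvd
  · have : n₀.factorization p = 0 := by
      rwa [← Nat.support_factorization, Finsupp.notMem_support_iff] at hmem
    omega
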